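/- Let (Z,ρ) = ∏_{m≥0}({0,1}, r)_m where r gives each point mass 1/2, and let the group ⊕_{m≥0}ℤ/2ℤ act on Z by coordinatewise addition. For n ≥ 0 let (Z_n, ρ_n) = ∏_{m≥n}({0,1}, r)_m and let π_n : Z → Z_n be the projection. Let Γ↷(X,μ) be a measure-preserving action of a countable group on a standard probability space and let p : X → Z be a quotient map with p(Γx) = (⊕_{m≥0}ℤ/2ℤ)·p(x) for μ-a.e. x ∈ X. Then for every sequence of functions f_n ∈ L^∞(Z_n, ρ_n) with ‖f_n‖_∞ ≤ 1 and every γ ∈ Γ, one has lim_n ‖(f_n∘π_n∘p) − (f_n∘π_n∘p)∘γ^{-1}‖_{L²(μ)} = 0. -/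

import Mathlib

open MeasureTheory Filter Set
open scoped ENNReal Topology

/-- **Claim 1 in the proof of Proposition 2.4.**  Let `(Z,ρ) = ∏_{m≥0}({0,1},(1/2,1/2))`
with the group `⊕_{m≥0} ℤ/2ℤ` acting by coordinatewise addition, and for `n ≥ 0` let
`π_n : Z → Z_n = ∏_{m≥n}{0,1}` be the projection.  Let `Γ ↷ (X,μ)` be a m.p. action of
a countable group and `p : X → Z` a quotient map with `p(Γx) = (⊕ℤ/2ℤ)·p(x)` a.e.
Then for any functions `f_n ∈ L^∞(Z_n,ρ_n)` with `‖f_n‖_∞ ≤ 1` and any `γ ∈ Γ`,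
`‖(f_n∘π_n∘p) − (f_n∘π_n∘p)∘γ⁻¹‖_{L²(μ)} → 0`. -/
theorem tail_functions_asymptotically_invariant
    {Γ X : Type*} [Group Γ] [Countable Γ] [MeasurableSpace X] [StandardBorelSpace X]
    (μ : Measure X) [IsProbabilityMeasure μ] [MulAction Γ X]
    (hμΓ : ∀ γ : Γ, MeasurePreserving (fun x => γ • x) μ μ)
    (ρ : Measure (ℕ → ZMod 2)) [IsProbabilityMeasure ρ]
    (hρ : ∀ (u : Finset ℕ) (v : ℕ → ZMod 2),
      ρ {z | ∀ i ∈ u, z i = v i} = (1 / 2 : ℝ≥0∞) ^ u.card)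
    (p : X → (ℕ → ZMod 2)) (hp : Measurable p) (hpm : Measure.map p μ = ρ)
    (hporb : ∀ᵐ x ∂μ, p '' (MulAction.orbit Γ x) =
      Set.range (fun g : ℕ →₀ ZMod 2 => fun m => g m + p x m))
    (f : ∀ n : ℕ, ({m : ℕ // n ≤ m} → ZMod 2) → ℂ)
    (hfmeas : ∀ n, Measurable (f n)) (hfbdd : ∀ n z, ‖f n z‖ ≤ 1) (γ : Γ) :
    Tendsto (fun n => eLpNorm
        (fun x => f n (fun m => p x m.1) - f n (fun m => p (γ⁻¹ • x) m.1)) 2 μ)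
      atTop (𝓝 0) := by

  set F : ℕ → X → ℂ := fun n x => f n (fun m => p x m.1) - f n (fun m => p (γ⁻¹ • x) m.1)
    with hF
  have hmγ : Measurable (fun x : X => γ⁻¹ • x) := (hμΓ γ⁻¹).measurable
  have hmeas : ∀ n, Measurable (F n) := by
    intro n
    have h1 : Measurable (fun x : X => (fun m : {m : ℕ // n ≤ m} => p x m.1)) :=
      measurable_pi_lambda _ fun m => (measurable_pi_apply m.1).comp hp
    exact ((hfmeas n).comp h1).sub (((hfmeas n).comp h1).comp hmγ)
  have hae : ∀ᵐ x ∂μ, ∀ᶠ n in atTop, F n x = 0 := by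
    filter_upwards [hporb] with x hx
    have hmem : p (γ⁻¹ • x) ∈ p '' MulAction.orbit Γ x := ⟨γ⁻¹ • x, ⟨γ⁻¹, rfl⟩, rfl⟩
    rw [hx] at hmem
    obtain ⟨g, hg⟩ := hmem
    refine eventually_atTop.2 ⟨g.support.sup id + 1, fun n hn => ?_⟩
    have harg : (fun m : {m : ℕ // n ≤ m} => p (γ⁻¹ • x) m.1) = fun m => p x m.1 := by
      funext m
      have hg0 : g m.1 = 0 := by
        by_contra h
        have h2 : m.1 ∈ g.support := Finsupp.mem_support_iff.2 h
        have h3 := Finset.le_sup (f := id) h2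
        have h4 := m.2
        simp only [id] at h3
        omega
      rw [← hg]
      simp [hg0]
    simp [hF, harg]
  have hbd : ∀ n x, (‖F n x‖₊ : ℝ≥0∞) ≤ 2 := by
    intro n x
    have : ‖F n x‖ ≤ 2 := by
      calc ‖F n x‖ ≤ ‖f n (fun m => p x m.1)‖ + ‖f n (fun m => p (γ⁻¹ • x) m.1)‖ :=
            norm_sub_le _ _
        _ ≤ 1 + 1 := add_le_add (hfbdd n _) (hfbdd n _)
        _ = 2 := by norm_num
    calc (‖F n x‖₊ : ℝ≥0∞) = ENNReal.ofReal ‖F n x‖ := (ofReal_norm _).symm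
      _ ≤ ENNReal.ofReal 2 := ENNReal.ofReal_le_ofReal this
      _ = 2 := by norm_num
  have key : Tendsto (fun n => ∫⁻ x, (‖F n x‖₊ : ℝ≥0∞) ^ (2 : ℝ) ∂μ) atTop (𝓝 0) := by
    have h0 : (0 : ℝ≥0∞) = ∫⁻ _x, (0 : ℝ≥0∞) ∂μ := by simp
    rw [h0]
    refine tendsto_lintegral_of_dominated_convergence (fun _ => (4 : ℝ≥0∞))
      (fun n => (hmeas n).enorm.pow_const _) (fun n => Filter.Eventually.of_forall fun x => ?_)
      (by simp) ?_
    · calc (‖F n x‖₊ : ℝ≥0∞) ^ (2 : ℝ) ≤ (2 : ℝ≥0∞) ^ (2 : ℝ) :=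
          ENNReal.rpow_le_rpow (hbd n x) (by norm_num)
        _ = 4 := by
          rw [show (2:ℝ) = ((2:ℕ):ℝ) by norm_num, ENNReal.rpow_natCast]
          norm_num
    · filter_upwards [hae] with x hx
      refine Tendsto.congr' ?_ tendsto_const_nhds
      filter_upwards [hx] with n hn
      simp [hn]
  have hform : ∀ n, eLpNorm (F n) 2 μ = (∫⁻ x, (‖F n x‖₊ : ℝ≥0∞) ^ (2 : ℝ) ∂μ) ^ (1 / (2 : ℝ)) := by
    intro n
    rw [eLpNorm_eq_lintegral_rpow_enorm_toReal (by norm_num) (by norm_num)]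
    norm_num
    rfl
  simp only [hF] at hform ⊢
  simp only [hform]
  have hcont : Tendsto (fun y : ℝ≥0∞ => y ^ (1 / (2:ℝ))) (𝓝 0) (𝓝 0) := by
    have h := (ENNReal.continuous_rpow_const (y := 1/(2:ℝ))).continuousAt (x := (0:ℝ≥0∞))
    simpa [ContinuousAt, ENNReal.zero_rpow_of_pos (show (0:ℝ) < 1/2 by norm_num)] using h
  exact hcont.comp key
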